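/- Any finite family of quadrants of the form $[x_0, \infty) \times [y_0, \infty)$ in the plane can be $k$-colored so that every point of the plane that is covered by at least $k$ of the quadrants is covered by quadrants of all $k$ colors. Equivalently, for positive quadrants $m_k^* = k$. -/

import Mathlib

open Finset

/-- Core lemma: given an injective key function `η`, there is a coloring such that
every "prefix ∩ key-downset" of size at most `k` is injectively colored. -/
private lemma lemA (k : ℕ) (hk : 0 < k) :
    ∀ (n : ℕ) (η : Fin n → ℕ), Function.Injective η →
    ∃ c : Fin n → Fin k, ∀ a b : ℕ,
      (univ.filter (fun i : Fin n => (i : ℕ) ≤ a ∧ η i ≤ b)).card ≤ k →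
      Set.InjOn c (univ.filter (fun i : Fin n => (i : ℕ) ≤ a ∧ η i ≤ b)) := by
  intro n
  induction n with
  | zero =>
    intro η _
    exact ⟨fun i => i.elim0, fun a b _ i hi => i.elim0⟩
  | succ n ih =>
    intro η hη
    have hη'inj : Function.Injective (fun i : Fin n => η (Fin.castSucc i)) :=
      hη.comp (Fin.castSucc_injective n)
    obtain ⟨c', hc'⟩ := ih _ hη'inj
    set η' : Fin n → ℕ := fun i => η (Fin.castSucc i) with hη'def
    -- rank function
    set r : Fin n → ℕ := fun i => (univ.filter (fun j : Fin n => η' j ≤ η' i)).card with hrdef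
    have hrmono : ∀ i j : Fin n, η' i < η' j → r i < r j := by
      intro i j hij
      have hsub : univ.filter (fun l : Fin n => η' l ≤ η' i) ⊆
          (univ.filter (fun l : Fin n => η' l ≤ η' j)).erase j := by
        intro l hl
        simp only [mem_filter, mem_univ, true_and] at hl
        refine Finset.mem_erase.mpr ⟨?_, by simp only [mem_filter, mem_univ, true_and]; omega⟩
        rintro rfl; omega
      calc r i ≤ ((univ.filter (fun l : Fin n => η' l ≤ η' j)).erase j).card :=
            Finset.card_le_card hsub
        _ < r j := Finset.card_erase_lt_of_mem (by simp)
    have hrmono' : ∀ i j : Fin n, η' i ≤ η' j → r i ≤ r j := by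
      intro i j hij
      apply Finset.card_le_card
      intro l hl
      simp only [mem_filter, mem_univ, true_and] at hl ⊢
      omega
    have hrpos : ∀ i : Fin n, 1 ≤ r i := by
      intro i
      have : i ∈ univ.filter (fun j : Fin n => η' j ≤ η' i) := by simp
      exact Finset.card_pos.mpr ⟨i, this⟩
    set W : Finset (Fin n) := univ.filter (fun i => r i < k) with hWdef
    have hWsmall : W.card < k := by
      have hrinj : Set.InjOn r (W : Set (Fin n)) := by
        intro i _ j _ hij
        by_contra hne
        rcases lt_trichotomy (η' i) (η' j) with h | h | h
        · exact absurd hij (Nat.ne_of_lt (hrmono _ _ h))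
        · exact hne (hη'inj h)
        · exact absurd hij.symm (Nat.ne_of_lt (hrmono _ _ h))
      have h1 : W.card = (W.image r).card := (Finset.card_image_of_injOn hrinj).symm
      have h2 : W.image r ⊆ Finset.Ioo 0 k := by
        intro v hv
        simp only [mem_image] at hv
        obtain ⟨i, hi, rfl⟩ := hv
        simp only [hWdef, mem_filter, mem_univ, true_and] at hi
        exact Finset.mem_Ioo.mpr ⟨hrpos i, hi⟩
      have h3 : (Finset.Ioo 0 k).card = k - 1 := by rw [Nat.card_Ioo]; omega
      have := Finset.card_le_card h2
      omega
    have hWinj : Set.InjOn c' (W : Set (Fin n)) := by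
      rcases W.eq_empty_or_nonempty with h | h
      · rw [h]; intro u hu; simp at hu
      · obtain ⟨i0, hi0, hmax⟩ := Finset.exists_max_image W η' h
        have hWeq : W = univ.filter (fun i : Fin n => (i : ℕ) ≤ n ∧ η' i ≤ η' i0) := by
          ext i
          simp only [hWdef, mem_filter, mem_univ, true_and]
          constructor
          · intro hi
            exact ⟨le_of_lt i.isLt, hmax i (by simp [hWdef, hi])⟩
          · intro ⟨_, hi⟩
            have : r i ≤ r i0 := hrmono' _ _ hi
            have : r i0 < k := by
              have := hi0; simp only [hWdef, mem_filter, mem_univ, true_and] at this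
              exact this
            omega
        rw [hWeq]
        apply hc'
        rw [← hWeq]
        exact le_of_lt hWsmall
    -- fresh color
    have hfreshex : ((univ : Finset (Fin k)) \ W.image c').Nonempty := by
      rw [Finset.sdiff_nonempty]
      intro hsub
      have h1 : (univ : Finset (Fin k)).card ≤ (W.image c').card := Finset.card_le_card hsub
      have h2 : (W.image c').card ≤ W.card := Finset.card_image_le
      simp only [Finset.card_univ, Fintype.card_fin] at h1
      omega
    obtain ⟨col0, hcol0⟩ := hfreshex
    have hcol0' : col0 ∉ W.image c' := (Finset.mem_sdiff.mp hcol0).2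
    refine ⟨Fin.snoc c' col0, ?_⟩
    intro a b hcard
    set S : Finset (Fin (n + 1)) := univ.filter (fun i : Fin (n+1) => (i : ℕ) ≤ a ∧ η i ≤ b)
      with hSdef
    have hmemS : ∀ i' : Fin n, Fin.castSucc i' ∈ S ↔ ((i' : ℕ) ≤ a ∧ η' i' ≤ b) := by
      intro i'
      simp [hSdef, hη'def]
    have hcardS' : (univ.filter (fun l : Fin n => (l : ℕ) ≤ a ∧ η' l ≤ b)).card ≤ S.card := by
      apply Finset.card_le_card_of_injOn Fin.castSucc
      · intro l hl
        simp only [Finset.mem_coe, mem_filter, mem_univ, true_and] at hl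
        exact (hmemS l).mpr hl
      · exact (Fin.castSucc_injective n).injOn
    -- any old element in S together with last ∈ S cannot have color col0
    have hfresh : ∀ j' : Fin n, Fin.castSucc j' ∈ S → Fin.last n ∈ S → c' j' ≠ col0 := by
      intro j' hj hlast hcj
      apply hcol0'
      rw [← hcj]
      apply Finset.mem_image_of_mem
      -- show j' ∈ W, i.e., r j' < k
      simp only [hWdef, mem_filter, mem_univ, true_and]
      have hlast' : (Fin.last n : ℕ) ≤ a ∧ η (Fin.last n) ≤ b := by
        have := hlast; simp only [hSdef, mem_filter, mem_univ, true_and] at this; exact this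
      have hj'cond : (j' : ℕ) ≤ a ∧ η' j' ≤ b := (hmemS j').mp hj
      have hsub : r j' ≤ (S.erase (Fin.last n)).card := by
        apply Finset.card_le_card_of_injOn Fin.castSucc
        · intro l hl
          simp only [Finset.mem_coe, mem_filter, mem_univ, true_and] at hl
          refine Finset.mem_erase.mpr ⟨(Fin.castSucc_lt_last l).ne, ?_⟩
          refine (hmemS l).mpr ⟨?_, le_trans hl hj'cond.2⟩
          have : (l : ℕ) < n := l.isLt
          have : (Fin.last n : ℕ) = n := rfl
          omega
        · exact (Fin.castSucc_injective n).injOn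
      have herase : (S.erase (Fin.last n)).card = S.card - 1 :=
        Finset.card_erase_of_mem hlast
      have hpos : 1 ≤ S.card := Finset.card_pos.mpr ⟨Fin.last n, hlast⟩
      omega
    intro i hi j hj hcij
    have hiS : i ∈ S := hi
    have hjS : j ∈ S := hj
    induction i using Fin.lastCases with
    | last =>
      induction j using Fin.lastCases with
      | last => rfl
      | cast j' =>
        exfalso
        rw [Fin.snoc_last, Fin.snoc_castSucc] at hcij
        exact hfresh j' hjS hiS hcij.symm
    | cast i' =>
      induction j using Fin.lastCases with
      | last =>
        exfalso
        rw [Fin.snoc_last, Fin.snoc_castSucc] at hcij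
        exact hfresh i' hiS hjS hcij
      | cast j' =>
        rw [Fin.snoc_castSucc, Fin.snoc_castSucc] at hcij
        have := hc' a b (le_trans hcardS' hcard)
        have hij : i' = j' := by
          apply this
          · simp only [Finset.mem_coe, mem_filter, mem_univ, true_and]
            exact (hmemS i').mp hiS
          · simp only [Finset.mem_coe, mem_filter, mem_univ, true_and]
            exact (hmemS j').mp hjS
          · exact hcij
        rw [hij]

/-- From the injectivity invariant, derive the polychromatic property. -/
private lemma lemB (k : ℕ) (hk : 0 < k) (n : ℕ) (η : Fin n → ℕ) (hη : Function.Injective η) :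
    ∃ c : Fin n → Fin k, ∀ a b : ℕ,
      k ≤ (univ.filter (fun i : Fin n => (i : ℕ) ≤ a ∧ η i ≤ b)).card →
      ∀ col : Fin k, ∃ i ∈ univ.filter (fun i : Fin n => (i : ℕ) ≤ a ∧ η i ≤ b), c i = col := by
  obtain ⟨c, hc⟩ := lemA k hk n η hη
  refine ⟨c, ?_⟩
  intro a b hcard col
  set g : ℕ → ℕ := fun b' => (univ.filter (fun i : Fin n => (i : ℕ) ≤ a ∧ η i ≤ b')).card
    with hgdef
  have hgmono : Monotone g := by
    intro b1 b2 h
    apply Finset.card_le_card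
    intro i hi
    simp only [mem_filter, mem_univ, true_and] at hi ⊢
    omega
  have hstep : ∀ b', g (b' + 1) ≤ g b' + 1 := by
    intro b'
    have hsub : (univ.filter (fun i : Fin n => (i : ℕ) ≤ a ∧ η i ≤ b' + 1)) ⊆
        (univ.filter (fun i : Fin n => (i : ℕ) ≤ a ∧ η i ≤ b')) ∪
        (univ.filter (fun i : Fin n => η i = b' + 1)) := by
      intro i hi
      simp only [mem_filter, mem_univ, true_and, Finset.mem_union] at hi ⊢
      omega
    have h2 : (univ.filter (fun i : Fin n => η i = b' + 1)).card ≤ 1 := by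
      apply Finset.card_le_one.mpr
      intro u hu v hv
      simp only [mem_filter, mem_univ, true_and] at hu hv
      exact hη (hu.trans hv.symm)
    calc g (b' + 1) ≤ _ := Finset.card_le_card hsub
      _ ≤ g b' + (univ.filter (fun i : Fin n => η i = b' + 1)).card := Finset.card_union_le _ _
      _ ≤ g b' + 1 := by omega
  have hex : ∃ b', k ≤ g b' := ⟨b, hcard⟩
  have hb0 : k ≤ g (Nat.find hex) := Nat.find_spec hex
  have hb0b : Nat.find hex ≤ b := Nat.find_min' hex hcard
  have hgk : g (Nat.find hex) = k := by
    rcases Nat.eq_zero_or_pos (Nat.find hex) with h0 | h0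
    · have hg0 : g 0 ≤ 1 := by
        apply Finset.card_le_one.mpr
        intro u hu v hv
        simp only [hgdef, mem_filter, mem_univ, true_and] at hu hv
        exact hη (by omega)
      rw [h0] at hb0 ⊢
      omega
    · have hlt : g (Nat.find hex - 1) < k := by
        have := Nat.find_min hex (m := Nat.find hex - 1) (by omega)
        omega
      have hs := hstep (Nat.find hex - 1)
      have he : Nat.find hex - 1 + 1 = Nat.find hex := by omega
      rw [he] at hs
      omega
  set S0 : Finset (Fin n) :=
    univ.filter (fun i : Fin n => (i : ℕ) ≤ a ∧ η i ≤ Nat.find hex) with hS0def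
  have hinj : Set.InjOn c (S0 : Set (Fin n)) := hc a (Nat.find hex) (le_of_eq hgk)
  have himg : (S0.image c).card = k := by
    rw [Finset.card_image_of_injOn hinj]
    exact hgk
  have huniv : S0.image c = univ :=
    Finset.eq_univ_of_card _ (by rw [himg, Fintype.card_fin])
  have hcol : col ∈ S0.image c := by rw [huniv]; exact mem_univ col
  obtain ⟨i, hiS0, hci⟩ := Finset.mem_image.mp hcol
  refine ⟨i, ?_, hci⟩
  simp only [hS0def, mem_filter, mem_univ, true_and] at hiS0 ⊢
  exact ⟨hiS0.1, le_trans hiS0.2 hb0b⟩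

/-- for positive quadrants m_k^* = k: any finite family of quadrants
[x_i,∞) × [y_i,∞) can be k-colored so that every point covered by at least k
quadrants is covered by quadrants of all k colors. -/
theorem stmt10 (n k : ℕ) (hk : 0 < k) (x y : Fin n → ℝ) :
    ∃ c : Fin n → Fin k, ∀ p : ℝ × ℝ,
      k ≤ {i : Fin n | x i ≤ p.1 ∧ y i ≤ p.2}.ncard →
      ∀ col : Fin k, ∃ i, c i = col ∧ x i ≤ p.1 ∧ y i ≤ p.2 := by
  set σ := Tuple.sort x with hσdef
  set z : Fin n → ℝ := fun j => y (σ j) with hzdef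
  set η : Fin n → ℕ :=
    fun j => (univ.filter (fun l : Fin n => z l < z j ∨ (z l = z j ∧ l ≤ j))).card with hηdef
  have hηlt : ∀ i j : Fin n, (z i < z j ∨ (z i = z j ∧ i < j)) → η i < η j := by
    intro i j hij
    have hsub : univ.filter (fun l : Fin n => z l < z i ∨ (z l = z i ∧ l ≤ i)) ⊆
        (univ.filter (fun l : Fin n => z l < z j ∨ (z l = z j ∧ l ≤ j))).erase j := by
      intro l hl
      simp only [mem_filter, mem_univ, true_and] at hl
      refine Finset.mem_erase.mpr ⟨?_, ?_⟩
      · rintro rfl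
        rcases hij with h | ⟨h, hlt⟩
        · rcases hl with h' | ⟨h', _⟩ <;> linarith
        · rcases hl with h' | ⟨h', hle⟩
          · linarith
          · exact absurd hle (not_le.mpr hlt)
      · simp only [mem_filter, mem_univ, true_and]
        rcases hij with h | ⟨h, hlt⟩
        · left
          rcases hl with h' | ⟨h', _⟩ <;> linarith
        · rcases hl with h' | ⟨h', hle⟩
          · left; linarith
          · right; exact ⟨by linarith, le_trans hle (le_of_lt hlt)⟩
    have hjmem : j ∈ univ.filter (fun l : Fin n => z l < z j ∨ (z l = z j ∧ l ≤ j)) := by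
      simp
    calc η i ≤ _ := Finset.card_le_card hsub
      _ < η j := Finset.card_erase_lt_of_mem hjmem
  have hηle : ∀ i j : Fin n, η i ≤ η j → z i ≤ z j := by
    intro i j h
    by_contra hc
    push_neg at hc
    exact absurd h (not_le.mpr (hηlt j i (Or.inl hc)))
  have hηinj : Function.Injective η := by
    intro i j hij
    by_contra hne
    rcases lt_trichotomy (z i) (z j) with h | h | h
    · exact absurd hij (Nat.ne_of_lt (hηlt i j (Or.inl h)))
    · rcases lt_or_gt_of_ne hne with h' | h'
      · exact absurd hij (Nat.ne_of_lt (hηlt i j (Or.inr ⟨h, h'⟩)))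
      · exact absurd hij.symm (Nat.ne_of_lt (hηlt j i (Or.inr ⟨h.symm, h'⟩)))
    · exact absurd hij.symm (Nat.ne_of_lt (hηlt j i (Or.inl h)))
  obtain ⟨c, hc⟩ := lemB k hk n η hηinj
  refine ⟨fun i => c (σ.symm i), ?_⟩
  intro p hp col
  have hset : {i : Fin n | x i ≤ p.1 ∧ y i ≤ p.2} =
      ↑(univ.filter (fun i : Fin n => x i ≤ p.1 ∧ y i ≤ p.2)) := by
    ext i; simp
  rw [hset, Set.ncard_coe_finset] at hp
  set Sp : Finset (Fin n) := univ.filter (fun i : Fin n => x i ≤ p.1 ∧ y i ≤ p.2) with hSpdef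
  set Sq : Finset (Fin n) := univ.filter (fun j : Fin n => x (σ j) ≤ p.1 ∧ z j ≤ p.2) with hSqdef
  have hcardeq : Sq.card = Sp.card := by
    apply Finset.card_bij (fun j _ => σ j)
    · intro j hj
      simp only [hSqdef, mem_filter, mem_univ, true_and] at hj
      simp only [hSpdef, mem_filter, mem_univ, true_and]
      exact hj
    · intro u hu v hv huv
      exact σ.injective huv
    · intro i hi
      refine ⟨σ.symm i, ?_, by simp⟩
      simp only [hSpdef, mem_filter, mem_univ, true_and] at hi
      simp only [hSqdef, mem_filter, mem_univ, true_and, hzdef, Equiv.apply_symm_apply]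
      exact hi
  have hpq : k ≤ Sq.card := by omega
  have hSqne : Sq.Nonempty := Finset.card_pos.mp (by omega)
  obtain ⟨j0, hj0⟩ := hSqne
  have hj0' : x (σ j0) ≤ p.1 ∧ z j0 ≤ p.2 := by
    simpa only [hSqdef, mem_filter, mem_univ, true_and] using hj0
  -- maximal index with x (σ j) ≤ p.1
  have hSxne : (univ.filter (fun j : Fin n => x (σ j) ≤ p.1)).Nonempty :=
    ⟨j0, by simp [hj0'.1]⟩
  obtain ⟨j1, hj1mem, hj1max⟩ :=
    Finset.exists_max_image (univ.filter (fun j : Fin n => x (σ j) ≤ p.1)) id hSxne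
  have hj1mem' : x (σ j1) ≤ p.1 := by
    simpa only [mem_filter, mem_univ, true_and] using hj1mem
  have hSyne : (univ.filter (fun j : Fin n => z j ≤ p.2)).Nonempty :=
    ⟨j0, by simp [hj0'.2]⟩
  obtain ⟨j2, hj2mem, hj2max⟩ :=
    Finset.exists_max_image (univ.filter (fun j : Fin n => z j ≤ p.2)) η hSyne
  have hj2mem' : z j2 ≤ p.2 := by
    simpa only [mem_filter, mem_univ, true_and] using hj2mem
  have heqa : ∀ j : Fin n, x (σ j) ≤ p.1 ↔ (j : ℕ) ≤ (j1 : ℕ) := by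
    intro j
    constructor
    · intro h
      exact Fin.le_def.mp (hj1max j (by simp [h]))
    · intro h
      have hle : j ≤ j1 := Fin.le_def.mpr h
      have := Tuple.monotone_sort x hle
      simp only [Function.comp_apply] at this
      exact le_trans this hj1mem'
  have heqb : ∀ j : Fin n, z j ≤ p.2 ↔ η j ≤ η j2 := by
    intro j
    constructor
    · intro h
      exact hj2max j (by simp [h])
    · intro h
      exact le_trans (hηle j j2 h) hj2mem'
  have hSqeq : Sq = univ.filter (fun j : Fin n => (j : ℕ) ≤ (j1 : ℕ) ∧ η j ≤ η j2) := by
    ext j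
    simp only [hSqdef, mem_filter, mem_univ, true_and]
    rw [heqa j, heqb j]
  rw [hSqeq] at hpq
  obtain ⟨j, hjmem, hcj⟩ := hc (j1 : ℕ) (η j2) hpq col
  simp only [mem_filter, mem_univ, true_and] at hjmem
  refine ⟨σ j, ?_, ?_, ?_⟩
  · simpa using hcj
  · exact (heqa j).mpr hjmem.1
  · have : z j ≤ p.2 := (heqb j).mpr hjmem.2
    exact this
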